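/- Suppose the pair of Banach spaces (E, F) has the weak maximizing property. Let T : E → F be a bounded linear operator and K : E → F a compact linear operator with ‖T‖ < ‖T + K‖. Then T + K attains its norm. -/

import Mathlib

open Filter Topology

/-- A compact operator maps weakly null sequences of unit vectors to norm-null sequences. -/
lemma compact_weaknull_aux {𝕜 E F : Type*} [RCLike 𝕜]
    [NormedAddCommGroup E] [NormedSpace 𝕜 E]
    [NormedAddCommGroup F] [NormedSpace 𝕜 F]
    (K : E →L[𝕜] F) (hK : IsCompactOperator K) (x : ℕ → E)
    (hb : ∀ n, ‖x n‖ ≤ 1)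
    (hw : ∀ f : E →L[𝕜] 𝕜, Tendsto (fun n => f (x n)) atTop (𝓝 0)) :
    Tendsto (fun n => ‖K (x n)‖) atTop (𝓝 0) := by
  have hC : IsCompact (closure (⇑K '' Metric.closedBall 0 1)) :=
    hK.isCompact_closure_image_closedBall (𝕜₁ := 𝕜) 1
  apply tendsto_of_subseq_tendsto
  intro ns hns
  have hmem : ∀ m, K (x (ns m)) ∈ closure (⇑K '' Metric.closedBall 0 1) := fun m =>
    subset_closure ⟨x (ns m), by simpa [Metric.mem_closedBall] using hb (ns m), rfl⟩
  obtain ⟨y, hyC, φ, hφ, hty⟩ := hC.tendsto_subseq hmem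
  have hy0 : y = 0 := by
    by_contra hy
    obtain ⟨g, hg1, hgy⟩ := exists_dual_vector 𝕜 y (norm_ne_zero_iff.mpr hy)
    have h1 : Tendsto (fun m => (g.comp K) (x (ns (φ m)))) atTop (𝓝 0) :=
      ((hw (g.comp K)).comp (hns.comp hφ.tendsto_atTop))
    have h2 : Tendsto (fun m => g (K (x (ns (φ m))))) atTop (𝓝 (g y)) :=
      (g.continuous.tendsto y).comp hty
    have : g y = 0 := tendsto_nhds_unique h2 h1
    rw [hgy] at this
    exact hy (by simpa [norm_eq_zero] using (RCLike.ofReal_eq_zero.mp this))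
  refine ⟨φ, ?_⟩
  have := hty.norm
  rw [hy0, norm_zero] at this
  exact this

theorem compact_perturbation_attains_norm {𝕜 E F : Type*} [RCLike 𝕜]
    [NormedAddCommGroup E] [NormedSpace 𝕜 E] [CompleteSpace E]
    [NormedAddCommGroup F] [NormedSpace 𝕜 F] [CompleteSpace F]
    (hWMP : ∀ S : E →L[𝕜] F,
      (∃ x : ℕ → E, (∀ n, ‖x n‖ = 1) ∧
        Tendsto (fun n => ‖S (x n)‖) atTop (𝓝 ‖S‖) ∧
        ¬ ∀ f : E →L[𝕜] 𝕜, Tendsto (fun n => f (x n)) atTop (𝓝 0)) →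
      ∃ x₀, ‖x₀‖ = 1 ∧ ‖S x₀‖ = ‖S‖)
    (T K : E →L[𝕜] F) (hK : IsCompactOperator K) (h : ‖T‖ < ‖T + K‖) :
    ∃ x₀, ‖x₀‖ = 1 ∧ ‖(T + K) x₀‖ = ‖T + K‖ := by
  set S := T + K with hS
  have hS0 : 0 < ‖S‖ := lt_of_le_of_lt (norm_nonneg T) h
  -- build a maximizing sequence of unit vectors
  have hlt : ∀ n : ℕ, ‖S‖ * (1 - 1 / (n + 1)) < ‖S‖ := by
    intro n
    have h1 : (0:ℝ) < 1 / (n + 1) := by positivity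
    nlinarith
  choose z hz1 hz2 using fun n => S.exists_lt_apply_of_lt_opNorm (hlt n)
  have hzne : ∀ n, z n ≠ 0 := by
    intro n hzn
    have := hz2 n
    rw [hzn] at this
    simp only [map_zero, norm_zero] at this
    have h1 : (1:ℝ) / (n + 1) ≤ 1 := by
      rw [div_le_one (by positivity)]; linarith
    nlinarith
  set x : ℕ → E := fun n => ((‖z n‖⁻¹ : ℝ) : 𝕜) • z n with hx
  have hx1 : ∀ n, ‖x n‖ = 1 := by
    intro n
    rw [hx]
    simp only [norm_smul, RCLike.norm_ofReal, abs_of_nonneg (inv_nonneg.mpr (norm_nonneg _))]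
    rw [inv_mul_cancel₀ (norm_ne_zero_iff.mpr (hzne n))]
  have hxS : ∀ n, ‖S (z n)‖ ≤ ‖S (x n)‖ := by
    intro n
    rw [hx]
    simp only [map_smul, norm_smul, RCLike.norm_ofReal,
      abs_of_nonneg (inv_nonneg.mpr (norm_nonneg _))]
    have h1 : (1:ℝ) ≤ ‖z n‖⁻¹ :=
      (one_le_inv₀ (norm_pos_iff.mpr (hzne n))).2 (le_of_lt (hz1 n))
    nlinarith [norm_nonneg (S (z n))]
  have hx2 : Tendsto (fun n => ‖S (x n)‖) atTop (𝓝 ‖S‖) := by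
    have hlo : Tendsto (fun n : ℕ => ‖S‖ * (1 - 1 / (n + 1))) atTop (𝓝 ‖S‖) := by
      have : Tendsto (fun n : ℕ => 1 / ((n : ℝ) + 1)) atTop (𝓝 0) :=
        tendsto_one_div_add_atTop_nhds_zero_nat
      have h2 : Tendsto (fun n : ℕ => ‖S‖ * (1 - 1 / (n + 1))) atTop (𝓝 (‖S‖ * (1 - 0))) :=
        (tendsto_const_nhds.sub this).const_mul ‖S‖
      simpa using h2
    refine tendsto_of_tendsto_of_tendsto_of_le_of_le hlo tendsto_const_nhds
      (fun n => le_trans (le_of_lt (hz2 n)) (hxS n)) (fun n => ?_)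
    calc ‖S (x n)‖ ≤ ‖S‖ * ‖x n‖ := S.le_opNorm _
    _ = ‖S‖ := by rw [hx1 n, mul_one]
  -- the sequence is not weakly null
  have hnw : ¬ ∀ f : E →L[𝕜] 𝕜, Tendsto (fun n => f (x n)) atTop (𝓝 0) := by
    intro hw
    have hKx : Tendsto (fun n => ‖K (x n)‖) atTop (𝓝 0) :=
      compact_weaknull_aux K hK x (fun n => le_of_eq (hx1 n)) hw
    have hub : ∀ n, ‖S (x n)‖ ≤ ‖T‖ + ‖K (x n)‖ := by
      intro n
      calc ‖S (x n)‖ = ‖T (x n) + K (x n)‖ := by rw [hS]; simp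
      _ ≤ ‖T (x n)‖ + ‖K (x n)‖ := norm_add_le _ _
      _ ≤ ‖T‖ + ‖K (x n)‖ := by
          have := T.le_opNorm (x n)
          rw [hx1 n, mul_one] at this
          linarith
    have hlim : Tendsto (fun n => ‖T‖ + ‖K (x n)‖) atTop (𝓝 (‖T‖ + 0)) :=
      tendsto_const_nhds.add hKx
    rw [add_zero] at hlim
    have : ‖S‖ ≤ ‖T‖ := le_of_tendsto_of_tendsto' hx2 hlim hub
    exact absurd h (not_lt.mpr this)
  exact hWMP S ⟨x, hx1, hx2, hnw⟩
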